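/- arXiv:1208.2787 — 2 statements merged into one kernel-verified Lean document; each statement's English description precedes it below -/
import Mathlib

section
/- (Multi-round preservation of the MDS property) Let n ≥ 4 and k = n−2. There exists q_0 depending only on n such that for every finite field F_q with q ≥ q_0 the following holds: start from any configuration of n nodes over F_q, each storing two chunks in W = F_q^{2k}, such that every collection of 2k of the 2n stored chunks is linearly independent (the initial Reed–Solomon state). Then for every (arbitrarily long) sequence of failed nodes l_1, l_2, …, l_r there exists a sequence of uncoded repairs — the t-th repair replaces node l_t's two chunks by two F_q-linear combinations of a set of n−1 chunks consisting of one chunk from each node other than l_t — such that after every round of repair the configuration satisfies the MDS property. -/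
/-- A collection of chunks is decodable if the corresponding vectors in `W = Fq^{2k}`
are linearly independent. -/
def Decodable {n d : ℕ} {Fq : Type*} [Field Fq]
    (P : Fin n → Fin 2 → Fin d → Fq) (C : Finset (Fin n × Fin 2)) : Prop :=
  LinearIndependent Fq (fun x : {y // y ∈ C} => P x.1.1 x.1.2)

/-- MDS property (k = n-2): for every `k` of the `n` nodes, the `2k` chunks stored on
those nodes are decodable. -/
def MDS (n : ℕ) {Fq : Type*} [Field Fq]
    (P : Fin n → Fin 2 → Fin (2 * (n - 2)) → Fq) : Prop :=
  ∀ S : Finset (Fin n), S.card = n - 2 → Decodable P (S ×ˢ Finset.univ)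

open Finset MvPolynomial

namespace Stmt6

variable {n : ℕ} {Fq : Type} [Field Fq]

def Mset (a b : Fin n) : Finset (Fin n × Fin 2) := (univ \ {a, b}) ×ˢ univ

def Gset (l a b : Fin n) (f : Fin n → Fin 2) : Finset (Fin n × Fin 2) :=
  ((univ \ {l, a, b}) ×ˢ univ) ∪ {(a, f a), (b, f b)}

lemma mem_Mset {a b : Fin n} {x : Fin n × Fin 2} :
    x ∈ Mset a b ↔ x.1 ≠ a ∧ x.1 ≠ b := by
  simp [Mset, Finset.mem_product]

lemma mem_Gset {l a b : Fin n} {f : Fin n → Fin 2} {x : Fin n × Fin 2} :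
    x ∈ Gset l a b f ↔ (x.1 ≠ l ∧ x.1 ≠ a ∧ x.1 ≠ b) ∨ x = (a, f a) ∨ x = (b, f b) := by
  simp [Gset, Finset.mem_product, or_assoc, Prod.ext_iff]
  tauto

lemma card_Mset {a b : Fin n} (hab : a ≠ b) : (Mset a b).card = 2 * (n - 2) := by
  rw [Mset, Finset.card_product, Finset.card_sdiff_of_subset (subset_univ _)]
  simp [Finset.card_insert_of_notMem, hab]
  ring

lemma card_Gset (hn : 4 ≤ n) {l a b : Fin n} {f : Fin n → Fin 2}
    (hab : a ≠ b) (hal : a ≠ l) (hbl : b ≠ l) : (Gset l a b f).card = 2 * (n - 2) := by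
  rw [Gset, Finset.card_union_of_disjoint, Finset.card_product, Finset.card_sdiff_of_subset (subset_univ _)]
  · have h3 : ({l, a, b} : Finset (Fin n)).card = 3 := by
      rw [Finset.card_insert_of_notMem, Finset.card_insert_of_notMem, Finset.card_singleton] <;>
        simp [hal.symm, hbl.symm, hab]
    have h2 : ({(a, f a), (b, f b)} : Finset (Fin n × Fin 2)).card = 2 := by
      rw [Finset.card_insert_of_notMem, Finset.card_singleton]
      simp [Prod.ext_iff, hab]
    rw [h3, h2]
    simp only [Finset.card_univ, Fintype.card_fin, Fintype.card_fin]
    omega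
  · rw [Finset.disjoint_right]
    intro x hx
    simp only [Finset.mem_insert, Finset.mem_singleton] at hx
    rcases hx with rfl | rfl <;> simp [Finset.mem_product]

lemma fst_ne {i : Fin n} {x : Fin n × Fin 2} (h0 : x ≠ (i, 0)) (h1 : x ≠ (i, 1)) : x.1 ≠ i := by
  intro h
  have : x.2 = 0 ∨ x.2 = 1 := by omega
  rcases this with h2 | h2
  · exact h0 (Prod.ext h h2)
  · exact h1 (Prod.ext h h2)

lemma decodable_map {d : ℕ} {P Q : Fin n → Fin 2 → Fin d → Fq} {C D : Finset (Fin n × Fin 2)}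
    (g : Fin n × Fin 2 → Fin n × Fin 2)
    (hmap : ∀ x ∈ C, g x ∈ D)
    (hinj : ∀ x ∈ C, ∀ y ∈ C, g x = g y → x = y)
    (hvec : ∀ x ∈ C, Q x.1 x.2 = P (g x).1 (g x).2)
    (hD : Decodable P D) : Decodable Q C := by
  have hg : Function.Injective
      (fun x : {y // y ∈ C} => (⟨g x.1, hmap x.1 x.2⟩ : {y // y ∈ D})) := by
    intro x y h
    exact Subtype.ext (hinj _ x.2 _ y.2 (congrArg Subtype.val h))
  have h2 := hD.comp _ hg
  have h3 : (fun x : {y // y ∈ C} => Q x.1.1 x.1.2) =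
      ((fun y : {z // z ∈ D} => P y.1.1 y.1.2) ∘
        (fun x : {y // y ∈ C} => (⟨g x.1, hmap x.1 x.2⟩ : {y // y ∈ D}))) := by
    funext x
    exact hvec x.1 x.2
  rw [Decodable, h3]
  exact h2

def repair (P : Fin n → Fin 2 → Fin (2 * (n - 2)) → Fq) (l : Fin n) (f : Fin n → Fin 2)
    (γ : Fin n → Fin 2 → Fq) : Fin n → Fin 2 → Fin (2 * (n - 2)) → Fq :=
  fun i c => if i = l then ∑ i' ∈ univ \ {l}, γ i' c • P i' (f i') else P i c

def γstar (a₀ b₀ : Fin n) : Fin n → Fin 2 → Fq := fun i c =>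
  if c = 0 then (if i = a₀ then 1 else 0) else (if i = b₀ then 1 else 0)

lemma repair_ne {P : Fin n → Fin 2 → Fin (2 * (n - 2)) → Fq} {l i : Fin n}
    {f : Fin n → Fin 2} {γ : Fin n → Fin 2 → Fq} (h : i ≠ l) (c : Fin 2) :
    repair P l f γ i c = P i c := if_neg h

lemma sum_indicator {P : Fin n → Fin 2 → Fin (2 * (n - 2)) → Fq} {l a₀ : Fin n}
    {f : Fin n → Fin 2} (ha : a₀ ≠ l) :
    (∑ i' ∈ univ \ {l}, (if i' = a₀ then (1 : Fq) else 0) • P i' (f i')) = P a₀ (f a₀) := by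
  rw [Finset.sum_congr rfl (fun i' _ =>
    (by split_ifs <;> simp : (if i' = a₀ then (1:Fq) else 0) • P i' (f i')
      = if i' = a₀ then P i' (f i') else 0))]
  rw [Finset.sum_ite_eq' (univ \ {l}) a₀ (fun i' => P i' (f i'))]
  simp [ha]

lemma repair_γstar_zero {P : Fin n → Fin 2 → Fin (2 * (n - 2)) → Fq} {l a₀ b₀ : Fin n}
    {f : Fin n → Fin 2} (ha : a₀ ≠ l) :
    repair P l f (γstar a₀ b₀) l 0 = P a₀ (f a₀) := by
  rw [repair, if_pos rfl]
  rw [Finset.sum_congr rfl (fun i' _ => by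
    rw [show (γstar a₀ b₀ i' 0 : Fq) = if i' = a₀ then 1 else 0 from rfl])]
  exact sum_indicator ha

lemma repair_γstar_one {P : Fin n → Fin 2 → Fin (2 * (n - 2)) → Fq} {l a₀ b₀ : Fin n}
    {f : Fin n → Fin 2} (hb : b₀ ≠ l) :
    repair P l f (γstar a₀ b₀) l 1 = P b₀ (f b₀) := by
  rw [repair, if_pos rfl]
  rw [Finset.sum_congr rfl (fun i' _ => by
    rw [show (γstar a₀ b₀ i' 1 : Fq) = if i' = b₀ then 1 else 0 from rfl])]
  exact sum_indicator hb

lemma witness_decodable {P : Fin n → Fin 2 → Fin (2 * (n - 2)) → Fq} {l a₀ b₀ : Fin n}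
    {f : Fin n → Fin 2} {C D : Finset (Fin n × Fin 2)}
    (ha : a₀ ≠ l) (hb : b₀ ≠ l)
    (ha1 : (l, 0) ∈ C → (a₀, f a₀) ∈ D ∧ (a₀, f a₀) ∉ C)
    (hb1 : (l, 1) ∈ C → (b₀, f b₀) ∈ D ∧ (b₀, f b₀) ∉ C)
    (hab : (l, 0) ∈ C → (l, 1) ∈ C → (a₀, f a₀) ≠ (b₀, f b₀))
    (hrest : ∀ x ∈ C, x.1 ≠ l → x ∈ D)
    (hD : Decodable P D) : Decodable (repair P l f (γstar a₀ b₀)) C := by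
  set g : Fin n × Fin 2 → Fin n × Fin 2 := fun x =>
    if x = (l, 0) then (a₀, f a₀) else if x = (l, 1) then (b₀, f b₀) else x with hg
  refine decodable_map g ?_ ?_ ?_ hD
  · intro x hx
    by_cases h0 : x = (l, 0)
    · simpa [hg, h0] using (ha1 (h0 ▸ hx)).1
    by_cases h1 : x = (l, 1)
    · simpa [hg, h0, h1] using (hb1 (h1 ▸ hx)).1
    · simpa [hg, h0, h1] using hrest x hx (fst_ne h0 h1)
  · have key : ∀ x ∈ C, (g x = x ∧ x ≠ (l, 0) ∧ x ≠ (l, 1)) ∨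
        (x = (l, 0) ∧ g x = (a₀, f a₀) ∧ g x ∉ C) ∨
        (x = (l, 1) ∧ g x = (b₀, f b₀) ∧ g x ∉ C) := by
      intro x hx
      by_cases h0 : x = (l, 0)
      · refine Or.inr (Or.inl ⟨h0, by simp [hg, h0], ?_⟩)
        rw [show g x = (a₀, f a₀) from by simp [hg, h0]]
        exact (ha1 (h0 ▸ hx)).2
      by_cases h1 : x = (l, 1)
      · refine Or.inr (Or.inr ⟨h1, by simp [hg, h0, h1], ?_⟩)
        rw [show g x = (b₀, f b₀) from by simp [hg, h0, h1]]
        exact (hb1 (h1 ▸ hx)).2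
      · exact Or.inl ⟨by simp [hg, h0, h1], h0, h1⟩
    intro x hx y hy hxy
    rcases key x hx with ⟨ex, _, _⟩ | ⟨ex0, ex, exc⟩ | ⟨ex1, ex, exc⟩ <;>
      rcases key y hy with ⟨ey, _, _⟩ | ⟨ey0, ey, eyc⟩ | ⟨ey1, ey, eyc⟩
    · rw [ex, ey] at hxy; exact hxy
    · exact absurd ((ex.symm.trans hxy) ▸ hx) eyc
    · exact absurd ((ex.symm.trans hxy) ▸ hx) eyc
    · exact absurd ((hxy.trans ey).symm ▸ hy) exc
    · exact ex0.trans ey0.symm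
    · exact absurd (ex.symm.trans (hxy.trans ey)) (hab (ex0 ▸ hx) (ey1 ▸ hy))
    · exact absurd ((hxy.trans ey).symm ▸ hy) exc
    · exact absurd (ey.symm.trans (hxy.symm.trans ex)) (hab (ey0 ▸ hy) (ex1 ▸ hx))
    · exact ex1.trans ey1.symm
  · intro x hx
    by_cases h0 : x = (l, 0)
    · subst h0
      simp only [hg, if_pos rfl]
      exact repair_γstar_zero ha
    by_cases h1 : x = (l, 1)
    · subst h1
      simp only [hg, if_neg h0, if_pos rfl, reduceIte]
      exact repair_γstar_one hb
    · simp only [hg, if_neg h0, if_neg h1]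
      exact repair_ne (fst_ne h0 h1) x.2

noncomputable def chunkIdx (C : Finset (Fin n × Fin 2)) (hC : C.card = 2 * (n - 2)) :
    Fin (2 * (n - 2)) ≃ {x // x ∈ C} :=
  (finCongr hC).symm.trans C.equivFin.symm

noncomputable def chunkMat {A : Type*} (u : Fin n → Fin 2 → Fin (2 * (n - 2)) → A)
    (C : Finset (Fin n × Fin 2)) (hC : C.card = 2 * (n - 2)) :
    Matrix (Fin (2 * (n - 2))) (Fin (2 * (n - 2))) A :=
  Matrix.of fun i j =>
    u ((chunkIdx C hC i) : Fin n × Fin 2).1 ((chunkIdx C hC i) : Fin n × Fin 2).2 j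

lemma decodable_iff_det (P : Fin n → Fin 2 → Fin (2 * (n - 2)) → Fq)
    (C : Finset (Fin n × Fin 2)) (hC : C.card = 2 * (n - 2)) :
    Decodable P C ↔ (chunkMat P C hC).det ≠ 0 := by
  have h1 : Decodable P C ↔ LinearIndependent Fq (fun i => chunkMat P C hC i) :=
    (linearIndependent_equiv (chunkIdx C hC)).symm
  rw [h1, show (fun i => chunkMat P C hC i) = (chunkMat P C hC).row from rfl,
    Matrix.linearIndependent_rows_iff_isUnit, Matrix.isUnit_iff_isUnit_det,
    isUnit_iff_ne_zero]

noncomputable def Ppoly (P : Fin n → Fin 2 → Fin (2 * (n - 2)) → Fq) (l : Fin n)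
    (f : Fin n → Fin 2) :
    Fin n → Fin 2 → Fin (2 * (n - 2)) → MvPolynomial (Fin n × Fin 2) Fq :=
  fun i c j => if i = l then ∑ i' ∈ univ \ {l}, X (i', c) * MvPolynomial.C (P i' (f i') j)
    else MvPolynomial.C (P i c j)

lemma eval_Ppoly (P : Fin n → Fin 2 → Fin (2 * (n - 2)) → Fq) (l : Fin n) (f : Fin n → Fin 2)
    (v : Fin n × Fin 2 → Fq) (i : Fin n) (c : Fin 2) (j : Fin (2 * (n - 2))) :
    eval v (Ppoly P l f i c j) = repair P l f (fun i c => v (i, c)) i c j := by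
  rw [Ppoly, repair]
  split_ifs with h
  · rw [map_sum, Finset.sum_apply]
    refine Finset.sum_congr rfl fun i' _ => ?_
    simp [smul_eq_mul]
  · simp

lemma eval_det_chunkMat (P : Fin n → Fin 2 → Fin (2 * (n - 2)) → Fq) (l : Fin n)
    (f : Fin n → Fin 2) (v : Fin n × Fin 2 → Fq)
    (C : Finset (Fin n × Fin 2)) (hC : C.card = 2 * (n - 2)) :
    eval v (chunkMat (Ppoly P l f) C hC).det
      = (chunkMat (repair P l f (fun i c => v (i, c))) C hC).det := by
  rw [(eval v : MvPolynomial (Fin n × Fin 2) Fq →+* Fq).map_det]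
  congr 1
  ext i j
  exact eval_Ppoly P l f v _ _ _

lemma totalDegree_Ppoly (P : Fin n → Fin 2 → Fin (2 * (n - 2)) → Fq) (l : Fin n)
    (f : Fin n → Fin 2) (i : Fin n) (c : Fin 2) (j : Fin (2 * (n - 2))) :
    (Ppoly P l f i c j).totalDegree ≤ 1 := by
  rw [Ppoly]
  split_ifs with h
  · refine (totalDegree_finset_sum _ _).trans (Finset.sup_le fun i' _ => ?_)
    refine (totalDegree_mul _ _).trans ?_
    simp [totalDegree_X]
  · simp [totalDegree_C]

lemma totalDegree_det_le {m : ℕ} {σ : Type} (M : Matrix (Fin m) (Fin m) (MvPolynomial σ Fq))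
    (h : ∀ i j, (M i j).totalDegree ≤ 1) : M.det.totalDegree ≤ m := by
  rw [Matrix.det_apply]
  refine (totalDegree_finset_sum _ _).trans (Finset.sup_le fun σ' _ => ?_)
  refine (totalDegree_smul_le _ _).trans ?_
  refine (totalDegree_finset_prod _ _).trans ?_
  calc ∑ i, (M (σ' i) i).totalDegree ≤ ∑ _i : Fin m, 1 := Finset.sum_le_sum fun i _ => h _ i
    _ = m := by simp

lemma exists_eval_ne_zero [Fintype Fq] {σ : Type} [Fintype σ] [DecidableEq σ]
    (p : MvPolynomial σ Fq) (hp : p ≠ 0) (hdeg : p.totalDegree + 1 ≤ Fintype.card Fq) :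
    ∃ v : σ → Fq, eval v p ≠ 0 := by
  by_contra h
  push_neg at h
  refine hp (MvPolynomial.eq_zero_of_eval_eq_zero (K := Fq) (σ := σ) p h ?_)
  refine MvPolynomial.restrictTotalDegree_le_restrictDegree (σ := σ) Fq
    (Fintype.card Fq - 1) ?_
  rw [MvPolynomial.mem_restrictTotalDegree]
  omega

def Inv (P : Fin n → Fin 2 → Fin (2 * (n - 2)) → Fq) : Prop :=
  (∀ a b : Fin n, a ≠ b → Decodable P (Mset a b)) ∧
  (∀ l : Fin n, ∃ f : Fin n → Fin 2, ∀ a b : Fin n, a ≠ b → a ≠ l → b ≠ l →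
    Decodable P (Gset l a b f))

lemma inv_initial (hn : 4 ≤ n) {P : Fin n → Fin 2 → Fin (2 * (n - 2)) → Fq}
    (h : ∀ C : Finset (Fin n × Fin 2), C.card = 2 * (n - 2) → Decodable P C) : Inv P := by
  constructor
  · intro a b hab
    exact h _ (card_Mset hab)
  · intro l
    exact ⟨fun _ => 0, fun a b hab hal hbl => h _ (card_Gset hn hab hal hbl)⟩

lemma mds_of_inv (hn : 4 ≤ n) {P : Fin n → Fin 2 → Fin (2 * (n - 2)) → Fq}
    (h : Inv P) : MDS n P := by
  intro S hS
  have hcompl : Sᶜ.card = 2 := by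
    rw [Finset.card_compl, hS]
    simp only [Fintype.card_fin]
    omega
  obtain ⟨a, b, hab, hS2⟩ := Finset.card_eq_two.mp hcompl
  have hMS : Mset a b = S ×ˢ univ := by
    rw [Mset]
    congr 1
    rw [← hS2, ← Finset.compl_eq_univ_sdiff, compl_compl]
  rw [← hMS]
  exact h.1 a b hab

lemma step [Fintype Fq] (hn : 4 ≤ n)
    (hq : (n * n + n * n * n) * (2 * n) + 1 ≤ Fintype.card Fq)
    {P : Fin n → Fin 2 → Fin (2 * (n - 2)) → Fq} (hP : Inv P) (l : Fin n) :
    ∃ (f : Fin n → Fin 2) (γ : Fin n → Fin 2 → Fq), Inv (repair P l f γ) := by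
  classical
  obtain ⟨hI1, hI2⟩ := hP
  obtain ⟨f, hf⟩ := hI2 l
  refine ⟨f, ?_⟩
  set f' : Fin n → Fin 2 := fun i => if i = l then 0 else (if f i = 0 then 1 else 0) with hf'
  have hf'ne : ∀ i : Fin n, i ≠ l → f' i ≠ f i := by
    intro i hi
    simp only [hf', if_neg hi]
    by_cases h : f i = 0 <;> simp [h]
    omega
  have hf'l : f' l = (0 : Fin 2) := by simp [hf']
  set PA : Finset (Fin n × Fin n) :=
    univ.filter (fun p => p.1 ≠ p.2 ∧ p.1 ≠ l ∧ p.2 ≠ l) with hPA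
  set PBC : Finset (Fin n × Fin n × Fin n) :=
    univ.filter (fun p => p.1 ≠ l ∧ p.2.1 ≠ p.2.2 ∧ p.2.1 ≠ p.1 ∧ p.2.2 ≠ p.1) with hPBC
  set polyOf : Finset (Fin n × Fin 2) → MvPolynomial (Fin n × Fin 2) Fq := fun C =>
    if hC : C.card = 2 * (n - 2) then (chunkMat (Ppoly P l f) C hC).det else 1 with hpolyOf
  -- nonzero-ness of a factor given a decodable witness
  have keyNZ : ∀ (C : Finset (Fin n × Fin 2)) (hC : C.card = 2 * (n - 2))
      (γw : Fin n → Fin 2 → Fq),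
      Decodable (repair P l f γw) C → polyOf C ≠ 0 := by
    intro C hC γw hdec h0
    have hev := eval_det_chunkMat P l f (fun s => γw s.1 s.2) C hC
    rw [hpolyOf] at h0
    simp only [dif_pos hC] at h0
    rw [h0, map_zero] at hev
    exact (decodable_iff_det _ C hC).mp hdec hev.symm
  -- witnesses for the A-family
  have hAfact : ∀ p ∈ PA, polyOf (Mset p.1 p.2) ≠ 0 := by
    intro p hp
    rw [hPA, Finset.mem_filter] at hp
    obtain ⟨-, hab, hal, hbl⟩ := hp
    refine keyNZ _ (card_Mset hab) (γstar p.1 p.2) ?_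
    refine witness_decodable hal hbl ?_ ?_ ?_ ?_ (hf p.1 p.2 hab hal hbl)
    · intro _
      constructor
      · rw [mem_Gset]; right; left; rfl
      · rw [mem_Mset]; simp
    · intro _
      constructor
      · rw [mem_Gset]; right; right; rfl
      · rw [mem_Mset]; simp
    · intro _ _ h
      rw [Prod.ext_iff] at h
      exact hab h.1
    · intro x hx hxl
      rw [mem_Mset] at hx
      rw [mem_Gset]
      exact Or.inl ⟨hxl, hx.1, hx.2⟩
  -- witnesses for the BC-family
  have hBCfact : ∀ p ∈ PBC, polyOf (Gset p.1 p.2.1 p.2.2 f') ≠ 0 := by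
    intro p hp
    rw [hPBC, Finset.mem_filter] at hp
    obtain ⟨-, hl'l, hab, hal', hbl'⟩ := hp
    obtain ⟨l', a, b⟩ := p
    simp only at hl'l hab hal' hbl' ⊢
    have hDec : Decodable P (Mset l l') := hI1 l l' (fun h => hl'l h.symm)
    by_cases hal : a = l
    · subst hal
      have hbl : b ≠ a := fun h => hab h.symm
      have hnotin : ((a, 1) : Fin n × Fin 2) ∉ Gset l' a b f' := by
        rw [mem_Gset]
        rintro (⟨-, h2, -⟩ | h | h)
        · exact h2 rfl
        · have h2 : (1 : Fin 2) = f' a := congrArg Prod.snd h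
          rw [hf'l] at h2
          exact absurd h2 (by decide)
        · rw [Prod.ext_iff] at h
          exact hab h.1
      refine keyNZ _ (card_Gset hn hab hal' hbl') (γstar b b) ?_
      refine witness_decodable (l := a) hbl hbl ?_ ?_ ?_ ?_ hDec
      · intro _
        constructor
        · rw [mem_Mset]; exact ⟨hbl, hbl'⟩
        · rw [mem_Gset]
          rintro (⟨-, -, h3⟩ | h | h)
          · exact h3 rfl
          · rw [Prod.ext_iff] at h
            exact hbl h.1
          · rw [Prod.ext_iff] at h
            exact hf'ne b hbl h.2.symm
      · intro h
        exact absurd h hnotin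
      · intro _ h
        exact absurd h hnotin
      · intro x hx hxl
        rw [mem_Gset] at hx
        rw [mem_Mset]
        rcases hx with ⟨h1, h2, h3⟩ | h | h
        · exact ⟨hxl, h1⟩
        · exact absurd (congrArg Prod.fst h) hxl
        · rw [h]; exact ⟨hbl, hbl'⟩
    · by_cases hbl : b = l
      · subst hbl
        have hnotin : ((b, 1) : Fin n × Fin 2) ∉ Gset l' a b f' := by
          rw [mem_Gset]
          rintro (⟨-, -, h3⟩ | h | h)
          · exact h3 rfl
          · rw [Prod.ext_iff] at h
            exact hab h.1.symm
          · have h2 : (1 : Fin 2) = f' b := congrArg Prod.snd h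
            rw [hf'l] at h2
            exact absurd h2 (by decide)
        refine keyNZ _ (card_Gset hn hab hal' hbl') (γstar a a) ?_
        refine witness_decodable (l := b) hal hal ?_ ?_ ?_ ?_ hDec
        · intro _
          constructor
          · rw [mem_Mset]; exact ⟨hal, hal'⟩
          · rw [mem_Gset]
            rintro (⟨-, h2, -⟩ | h | h)
            · exact h2 rfl
            · rw [Prod.ext_iff] at h
              exact hf'ne a hal h.2.symm
            · rw [Prod.ext_iff] at h
              exact hab h.1
        · intro h
          exact absurd h hnotin
        · intro _ h
          exact absurd h hnotin
        · intro x hx hxl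
          rw [mem_Gset] at hx
          rw [mem_Mset]
          rcases hx with ⟨h1, h2, h3⟩ | h | h
          · exact ⟨hxl, h1⟩
          · rw [h]; exact ⟨hal, hal'⟩
          · exact absurd (congrArg Prod.fst h) hxl
      · refine keyNZ _ (card_Gset hn hab hal' hbl') (γstar a b) ?_
        refine witness_decodable hal hbl ?_ ?_ ?_ ?_ hDec
        · intro _
          constructor
          · rw [mem_Mset]; exact ⟨hal, hal'⟩
          · rw [mem_Gset]
            rintro (⟨-, h2, -⟩ | h | h)
            · exact h2 rfl
            · rw [Prod.ext_iff] at h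
              exact hf'ne a hal h.2.symm
            · rw [Prod.ext_iff] at h
              exact hab h.1
        · intro _
          constructor
          · rw [mem_Mset]; exact ⟨hbl, hbl'⟩
          · rw [mem_Gset]
            rintro (⟨-, -, h3⟩ | h | h)
            · exact h3 rfl
            · rw [Prod.ext_iff] at h
              exact hab h.1.symm
            · rw [Prod.ext_iff] at h
              exact hf'ne b hbl h.2.symm
        · intro _ _ h
          rw [Prod.ext_iff] at h
          exact hab h.1
        · intro x hx hxl
          rw [mem_Gset] at hx
          rw [mem_Mset]
          rcases hx with ⟨h1, h2, h3⟩ | h | h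
          · exact ⟨hxl, h1⟩
          · rw [h]; exact ⟨hal, hal'⟩
          · rw [h]; exact ⟨hbl, hbl'⟩
  -- the big polynomial
  set big := (∏ p ∈ PA, polyOf (Mset p.1 p.2)) *
    ∏ p ∈ PBC, polyOf (Gset p.1 p.2.1 p.2.2 f') with hbig
  have hbigne : big ≠ 0 := by
    refine mul_ne_zero ?_ ?_ <;> rw [Finset.prod_ne_zero_iff]
    · exact hAfact
    · exact hBCfact
  have hdegOf : ∀ C : Finset (Fin n × Fin 2), (polyOf C).totalDegree ≤ 2 * (n - 2) := by
    intro C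
    by_cases hC : C.card = 2 * (n - 2)
    · rw [hpolyOf]
      simp only [dif_pos hC]
      exact totalDegree_det_le _ (fun i j => totalDegree_Ppoly P l f _ _ _)
    · rw [hpolyOf]
      simp only [dif_neg hC]
      simp
  have hdeg : big.totalDegree + 1 ≤ Fintype.card Fq := by
    refine le_trans ?_ hq
    have h1 : big.totalDegree ≤ (n * n + n * n * n) * (2 * n) := by
      rw [hbig]
      refine (totalDegree_mul _ _).trans ?_
      have hA : (∏ p ∈ PA, polyOf (Mset p.1 p.2)).totalDegree ≤ n * n * (2 * n) := by
        refine (totalDegree_finset_prod _ _).trans ?_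
        calc ∑ p ∈ PA, (polyOf (Mset p.1 p.2)).totalDegree
            ≤ ∑ _p ∈ PA, 2 * (n - 2) := Finset.sum_le_sum (fun p _ => hdegOf _)
          _ = PA.card * (2 * (n - 2)) := by rw [Finset.sum_const, smul_eq_mul]
          _ ≤ (n * n) * (2 * n) := by
              refine Nat.mul_le_mul ?_ (by omega)
              calc PA.card ≤ (univ : Finset (Fin n × Fin n)).card := Finset.card_filter_le _ _
                _ = n * n := by simp
      have hB : (∏ p ∈ PBC, polyOf (Gset p.1 p.2.1 p.2.2 f')).totalDegree
          ≤ n * n * n * (2 * n) := by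
        refine (totalDegree_finset_prod _ _).trans ?_
        calc ∑ p ∈ PBC, (polyOf (Gset p.1 p.2.1 p.2.2 f')).totalDegree
            ≤ ∑ _p ∈ PBC, 2 * (n - 2) := Finset.sum_le_sum (fun p _ => hdegOf _)
          _ = PBC.card * (2 * (n - 2)) := by rw [Finset.sum_const, smul_eq_mul]
          _ ≤ (n * n * n) * (2 * n) := by
              refine Nat.mul_le_mul ?_ (by omega)
              calc PBC.card ≤ (univ : Finset (Fin n × Fin n × Fin n)).card :=
                    Finset.card_filter_le _ _
                _ = n * n * n := by simp [mul_assoc]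
      calc (∏ p ∈ PA, polyOf (Mset p.1 p.2)).totalDegree +
            (∏ p ∈ PBC, polyOf (Gset p.1 p.2.1 p.2.2 f')).totalDegree
          ≤ n * n * (2 * n) + n * n * n * (2 * n) := Nat.add_le_add hA hB
        _ = (n * n + n * n * n) * (2 * n) := by ring
    omega
  obtain ⟨v, hv⟩ := exists_eval_ne_zero big hbigne hdeg
  refine ⟨fun i c => v (i, c), ?_⟩
  -- each factor evaluates to something nonzero
  rw [hbig, map_mul, map_prod, map_prod] at hv
  have hvA : ∀ p ∈ PA, eval v (polyOf (Mset p.1 p.2)) ≠ 0 := by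
    intro p hp h0
    exact (mul_ne_zero_iff.mp hv).1 (Finset.prod_eq_zero hp h0)
  have hvB : ∀ p ∈ PBC, eval v (polyOf (Gset p.1 p.2.1 p.2.2 f')) ≠ 0 := by
    intro p hp h0
    exact (mul_ne_zero_iff.mp hv).2 (Finset.prod_eq_zero hp h0)
  have hdecA : ∀ p ∈ PA, Decodable (repair P l f (fun i c => v (i, c))) (Mset p.1 p.2) := by
    intro p hp
    have hp' := hp
    rw [hPA, Finset.mem_filter] at hp'
    have hab : p.1 ≠ p.2 := hp'.2.1
    have h0 := hvA p hp
    rw [hpolyOf] at h0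
    simp only [dif_pos (card_Mset hab)] at h0
    rw [eval_det_chunkMat P l f v _ (card_Mset hab)] at h0
    exact (decodable_iff_det _ _ (card_Mset hab)).mpr h0
  have hdecB : ∀ p ∈ PBC,
      Decodable (repair P l f (fun i c => v (i, c))) (Gset p.1 p.2.1 p.2.2 f') := by
    intro p hp
    have hp' := hp
    rw [hPBC, Finset.mem_filter] at hp'
    obtain ⟨-, hl'l, hab, hal', hbl'⟩ := hp'
    have hcard := card_Gset hn (f := f') hab hal' hbl'
    have h0 := hvB p hp
    rw [hpolyOf] at h0
    simp only [dif_pos hcard] at h0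
    rw [eval_det_chunkMat P l f v _ hcard] at h0
    exact (decodable_iff_det _ _ hcard).mpr h0
  -- assemble the invariant for the repaired configuration
  constructor
  · intro a b hab
    by_cases hal : a = l
    · subst hal
      refine decodable_map id (fun x hx => hx) (fun x _ y _ h => h) ?_ (hI1 a b hab)
      intro x hx
      rw [mem_Mset] at hx
      exact repair_ne hx.1 x.2
    · by_cases hbl : b = l
      · subst hbl
        refine decodable_map id (fun x hx => hx) (fun x _ y _ h => h) ?_ (hI1 a b hab)
        intro x hx
        rw [mem_Mset] at hx
        exact repair_ne hx.2 x.2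
      · exact hdecA (a, b) (by rw [hPA, Finset.mem_filter]; exact ⟨mem_univ _, hab, hal, hbl⟩)
  · intro m
    by_cases hm : m = l
    · subst hm
      refine ⟨f, fun a b hab ham hbm => ?_⟩
      refine decodable_map id (fun x hx => hx) (fun x _ y _ h => h) ?_ (hf a b hab ham hbm)
      intro x hx
      rw [mem_Gset] at hx
      rcases hx with ⟨h1, -, -⟩ | h | h
      · exact repair_ne h1 x.2
      · rw [h]; exact repair_ne ham _
      · rw [h]; exact repair_ne hbm _
    · refine ⟨f', fun a b hab ham hbm => ?_⟩
      exact hdecB (m, a, b)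
        (by rw [hPBC, Finset.mem_filter]; exact ⟨mem_univ _, hm, hab, ham, hbm⟩)


end Stmt6

open Stmt6 in
/-- multi-round preservation of the MDS property: there exists `q₀`
depending only on `n` such that over any finite field with at least `q₀` elements,
starting from any configuration in which every collection of `2k` of the `2n`
stored chunks is linearly independent (the initial Reed–Solomon state), for every
sequence of failed nodes `l 0, …, l (r-1)` there exists a sequence of uncoded
repairs — the `t`-th repair replaces node `l t`'s two chunks by two linear
combinations of one chunk from each node other than `l t` — such that after every
round of repair the configuration satisfies the MDS property. -/
theorem stmt6 (n : ℕ) (hn : 4 ≤ n) :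
    ∃ q0 : ℕ, ∀ (Fq : Type) [Field Fq] [Fintype Fq], q0 ≤ Fintype.card Fq →
      ∀ P0 : Fin n → Fin 2 → Fin (2 * (n - 2)) → Fq,
        (∀ C : Finset (Fin n × Fin 2), C.card = 2 * (n - 2) → Decodable P0 C) →
        ∀ (r : ℕ) (l : Fin r → Fin n),
          ∃ Pseq : Fin (r + 1) → (Fin n → Fin 2 → Fin (2 * (n - 2)) → Fq),
            Pseq 0 = P0 ∧
            ∀ t : Fin r,
              (∃ (f : Fin n → Fin 2) (γ : Fin n → Fin 2 → Fq),
                ∀ i j, Pseq t.succ i j =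
                  if i = l t then
                    ∑ i' ∈ Finset.univ \ {l t}, γ i' j • Pseq t.castSucc i' (f i')
                  else Pseq t.castSucc i j) ∧
              MDS n (Pseq t.succ) := by
  classical
  refine ⟨(n * n + n * n * n) * (2 * n) + 1, ?_⟩
  intro Fq _ _ hq P0 hP0 r l
  -- iterate the one-round step
  have hstep : ∀ (P : Fin n → Fin 2 → Fin (2 * (n - 2)) → Fq), Inv P → ∀ m : Fin n,
      ∃ P' : Fin n → Fin 2 → Fin (2 * (n - 2)) → Fq, Inv P' ∧
        ∃ (f : Fin n → Fin 2) (γ : Fin n → Fin 2 → Fq),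
          ∀ i j, P' i j = if i = m then ∑ i' ∈ Finset.univ \ {m}, γ i' j • P i' (f i')
            else P i j := by
    intro P hP m
    obtain ⟨f, γ, hinv⟩ := step hn hq hP m
    exact ⟨repair P m f γ, hinv, f, γ, fun i j => rfl⟩
  -- build the sequence by recursion
  let T : ℕ → {P : Fin n → Fin 2 → Fin (2 * (n - 2)) → Fq // Inv P} :=
    Nat.rec ⟨P0, inv_initial hn hP0⟩ (fun m prev =>
      if h : m < r then
        ⟨(hstep prev.1 prev.2 (l ⟨m, h⟩)).choose,
         (hstep prev.1 prev.2 (l ⟨m, h⟩)).choose_spec.1⟩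
      else prev)
  refine ⟨fun t => (T t.1).1, rfl, ?_⟩
  intro t
  have hTsucc : T (t.1 + 1) =
      ⟨(hstep (T t.1).1 (T t.1).2 (l ⟨t.1, t.2⟩)).choose,
       (hstep (T t.1).1 (T t.1).2 (l ⟨t.1, t.2⟩)).choose_spec.1⟩ := by
    show (if h : t.1 < r then _ else _) = _
    rw [dif_pos t.2]
  have hlt : l ⟨t.1, t.2⟩ = l t := by congr
  constructor
  · obtain ⟨f, γ, hrep⟩ := (hstep (T t.1).1 (T t.1).2 (l ⟨t.1, t.2⟩)).choose_spec.2
    refine ⟨f, γ, fun i j => ?_⟩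
    show (T (t.1 + 1)).1 i j = if i = l t then
        ∑ i' ∈ Finset.univ \ {l t}, γ i' j • (T t.1).1 i' (f i') else (T t.1).1 i j
    rw [hlt] at hrep
    rw [hTsucc]
    exact hrep i j
  · have hinv : Inv ((T (t.1 + 1)).1) := (T (t.1 + 1)).2
    show MDS n (T (t.1 + 1)).1
    exact mds_of_inv hn hinv
end

section
/- (Existence of encoding coefficients for the deterministic construction) Let k ≥ 2. There exists q_0, depending only on k, such that for every finite field F_q with q ≥ q_0 and every family of scalars λ^{(i′)}_{i,1} ∈ F_q indexed by ordered pairs of distinct i, i′ ∈ {2,…,k+2}, there exist γ_{i,1}, γ_{i,2} ∈ F_q for i ∈ {2,…,k+2} simultaneously satisfying: (i) γ_{i,1}γ_{j,2} ≠ γ_{i,2}γ_{j,1} for all distinct i, j ∈ {2,…,k+2}; (ii) γ_{i,2} + γ_{i′,2}λ^{(i′)}_{i,1} ≠ 0 for all distinct i, i′ ∈ {2,…,k+2}; and (iii) (γ_{i,1} + γ_{i″,1}λ^{(i″)}_{i,1})(γ_{i′,2} + γ_{i″,2}λ^{(i″)}_{i′,1}) ≠ (γ_{i′,1} + γ_{i″,1}λ^{(i″)}_{i′,1})(γ_{i,2}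 + γ_{i″,2}λ^{(i″)}_{i,1}) for all pairwise distinct i, i′, i″ ∈ {2,…,k+2}. -/
open MvPolynomial

namespace Stmt11Aux

variable (Fq : Type) [Field Fq]

/-- condition (i) polynomial -/
noncomputable def pA (i j : ℕ) : MvPolynomial (ℕ × Fin 2) Fq :=
  X (i, 0) * X (j, 1) - X (i, 1) * X (j, 0)

/-- condition (ii) polynomial -/
noncomputable def pB (lam : ℕ → ℕ → Fq) (i j : ℕ) : MvPolynomial (ℕ × Fin 2) Fq :=
  X (i, 1) + X (j, 1) * C (lam i j)

/-- condition (iii) polynomial -/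
noncomputable def pC (lam : ℕ → ℕ → Fq) (i i' i'' : ℕ) : MvPolynomial (ℕ × Fin 2) Fq :=
  (X (i, 0) + X (i'', 0) * C (lam i i'')) * (X (i', 1) + X (i'', 1) * C (lam i' i'')) -
  (X (i', 0) + X (i'', 0) * C (lam i' i'')) * (X (i, 1) + X (i'', 1) * C (lam i i''))

noncomputable def pG (lam : ℕ → ℕ → Fq) (t : ℕ × ℕ × ℕ) : MvPolynomial (ℕ × Fin 2) Fq :=
  (if t.1 = t.2.1 then 1 else pA Fq t.1 t.2.1) *
    ((if t.1 = t.2.1 then 1 else pB Fq lam t.1 t.2.1) *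
      (if t.1 = t.2.1 ∨ t.1 = t.2.2 ∨ t.2.1 = t.2.2 then 1 else pC Fq lam t.1 t.2.1 t.2.2))

noncomputable def dG (t : ℕ × ℕ × ℕ) : ℕ :=
  (if t.1 = t.2.1 then 0 else 2) +
    ((if t.1 = t.2.1 then 0 else 1) +
      (if t.1 = t.2.1 ∨ t.1 = t.2.2 ∨ t.2.1 = t.2.2 then 0 else 2))

lemma pA_homog (i j : ℕ) : (pA Fq i j).IsHomogeneous 2 :=
  (((isHomogeneous_X _ _).mul (isHomogeneous_X _ _)).sub
    ((isHomogeneous_X _ _).mul (isHomogeneous_X _ _)))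

lemma pB_homog (lam : ℕ → ℕ → Fq) (i j : ℕ) : (pB Fq lam i j).IsHomogeneous 1 := by
  have h1 : ((X (j, 1) : MvPolynomial (ℕ × Fin 2) Fq) * C (lam i j)).IsHomogeneous 1 := by
    simpa using (isHomogeneous_X Fq ((j : ℕ), (1 : Fin 2))).mul (isHomogeneous_C _ (lam i j))
  exact (isHomogeneous_X _ _).add h1

lemma pC_homog (lam : ℕ → ℕ → Fq) (i i' i'' : ℕ) : (pC Fq lam i i' i'').IsHomogeneous 2 := by
  have hx : ∀ (a b : ℕ) (c d : Fin 2) (z : Fq),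
      ((X (a, c) : MvPolynomial (ℕ × Fin 2) Fq) + X (b, d) * C z).IsHomogeneous 1 := by
    intro a b c d z
    have h1 : ((X (b, d) : MvPolynomial (ℕ × Fin 2) Fq) * C z).IsHomogeneous 1 := by
      simpa using (isHomogeneous_X Fq (b, d)).mul (isHomogeneous_C _ z)
    exact (isHomogeneous_X _ _).add h1
  exact ((hx _ _ _ _ _).mul (hx _ _ _ _ _)).sub ((hx _ _ _ _ _).mul (hx _ _ _ _ _))

lemma pG_homog (lam : ℕ → ℕ → Fq) (t : ℕ × ℕ × ℕ) : (pG Fq lam t).IsHomogeneous (dG t) := by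
  unfold pG dG
  split_ifs with h1 h2 <;>
    exact (IsHomogeneous.mul (by first | exact isHomogeneous_one _ _ | exact pA_homog Fq _ _)
      (IsHomogeneous.mul (by first | exact isHomogeneous_one _ _ | exact pB_homog Fq lam _ _)
        (by first | exact isHomogeneous_one _ _ | exact pC_homog Fq lam _ _ _)))

lemma dG_le (t : ℕ × ℕ × ℕ) : dG t ≤ 5 := by
  unfold dG; split_ifs <;> norm_num

lemma pA_ne_zero {i j : ℕ} (hij : i ≠ j) : pA Fq i j ≠ 0 := by
  intro h
  have := congrArg (eval fun p : ℕ × Fin 2 =>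
    if p = (i, 0) ∨ p = (j, 1) then (1 : Fq) else 0) h
  simp [pA, Prod.ext_iff, hij, Ne.symm hij] at this

lemma pB_ne_zero (lam : ℕ → ℕ → Fq) {i j : ℕ} (hij : i ≠ j) : pB Fq lam i j ≠ 0 := by
  intro h
  have := congrArg (eval fun p : ℕ × Fin 2 => if p = (i, 1) then (1 : Fq) else 0) h
  simp [pB, Prod.ext_iff, hij, Ne.symm hij] at this

lemma pC_ne_zero (lam : ℕ → ℕ → Fq) {i i' i'' : ℕ} (h1 : i ≠ i') (h2 : i ≠ i'')
    (h3 : i' ≠ i'') : pC Fq lam i i' i'' ≠ 0 := by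
  intro h
  have := congrArg (eval fun p : ℕ × Fin 2 =>
    if p = (i, 0) ∨ p = (i', 1) then (1 : Fq) else 0) h
  simp [pC, Prod.ext_iff, h1, h2, h3, Ne.symm h1, Ne.symm h2, Ne.symm h3] at this

lemma pG_ne_zero (lam : ℕ → ℕ → Fq) (t : ℕ × ℕ × ℕ) : pG Fq lam t ≠ 0 := by
  unfold pG
  refine mul_ne_zero ?_ (mul_ne_zero ?_ ?_)
  · split_ifs with h1
    · exact one_ne_zero
    · exact pA_ne_zero Fq h1
  · split_ifs with h1
    · exact one_ne_zero
    · exact pB_ne_zero Fq lam h1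
  · split_ifs with h1
    · exact one_ne_zero
    · push_neg at h1
      exact pC_ne_zero Fq lam h1.1 h1.2.1 h1.2.2

end Stmt11Aux

namespace Stmt11Aux

lemma helper (Fq : Type) [Field Fq] [Fintype Fq] (S : Finset ℕ) (lam : ℕ → ℕ → Fq)
    (h5 : 5 * S.card ^ 3 < Fintype.card Fq) :
    ∃ γ : ℕ → Fin 2 → Fq,
      (∀ i ∈ S, ∀ j ∈ S, i ≠ j → γ i 0 * γ j 1 ≠ γ i 1 * γ j 0) ∧
      (∀ i ∈ S, ∀ i' ∈ S, i ≠ i' → γ i 1 + γ i' 1 * lam i i' ≠ 0) ∧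
      (∀ i ∈ S, ∀ i' ∈ S, ∀ i'' ∈ S, i ≠ i' → i ≠ i'' → i' ≠ i'' →
        (γ i 0 + γ i'' 0 * lam i i'') * (γ i' 1 + γ i'' 1 * lam i' i'') ≠
        (γ i' 0 + γ i'' 0 * lam i' i'') * (γ i 1 + γ i'' 1 * lam i i'')) := by
  classical
  set T : Finset (ℕ × ℕ × ℕ) := S ×ˢ S ×ˢ S with hT
  set P : MvPolynomial (ℕ × Fin 2) Fq := ∏ t ∈ T, pG Fq lam t with hP
  have hhom : P.IsHomogeneous (∑ t ∈ T, dG t) :=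
    IsHomogeneous.prod _ _ _ fun t _ => pG_homog Fq lam t
  have hne : P ≠ 0 := Finset.prod_ne_zero_iff.2 fun t _ => pG_ne_zero Fq lam t
  have hdeg : (∑ t ∈ T, dG t) ≤ 5 * S.card ^ 3 := by
    calc (∑ t ∈ T, dG t) ≤ T.card * 5 :=
          Finset.sum_le_card_nsmul T dG 5 fun t _ => dG_le t
      _ ≤ 5 * S.card ^ 3 := by
          simp only [hT, Finset.card_product]
          ring_nf
          omega
  have hcast : ((∑ t ∈ T, dG t : ℕ) : Cardinal) ≤ Cardinal.mk Fq := by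
    rw [Cardinal.mk_fintype]
    exact_mod_cast le_of_lt (lt_of_le_of_lt hdeg h5)
  have hex : ∃ r : ℕ × Fin 2 → Fq, eval r P ≠ 0 := by
    by_contra h
    push_neg at h
    exact hne (hhom.eq_zero_of_forall_eval_eq_zero_of_le_card h hcast)
  obtain ⟨r, hr⟩ := hex
  have key : ∀ t ∈ T, eval r (pG Fq lam t) ≠ 0 := by
    intro t ht
    exact ne_zero_of_dvd_ne_zero hr (map_dvd (eval r) (Finset.dvd_prod_of_mem _ ht))
  refine ⟨fun a b => r (a, b), ?_, ?_, ?_⟩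
  · intro i hi j hj hij
    have ht : (i, j, i) ∈ T := by
      simp [hT, Finset.mem_product, hi, hj]
    have h1 := key _ ht
    simp only [pG, hij, if_neg hij, if_pos (Or.inr (Or.inl rfl)), map_mul, mul_one,
      mul_ne_zero_iff] at h1
    have h2 := h1.1
    rw [← sub_ne_zero]
    simpa [pA] using h2
  · intro i hi j hj hij
    have ht : (i, j, i) ∈ T := by
      simp [hT, Finset.mem_product, hi, hj]
    have h1 := key _ ht
    simp only [pG, hij, if_neg hij, if_pos (Or.inr (Or.inl rfl)), map_mul, mul_one,
      mul_ne_zero_iff] at h1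
    have h2 := h1.2.1
    simpa [pB] using h2
  · intro i hi i' hi' i'' hi'' h1' h2' h3'
    have ht : (i, i', i'') ∈ T := by
      simp [hT, Finset.mem_product, hi, hi', hi'']
    have h1 := key _ ht
    have hor : ¬(i = i' ∨ i = i'' ∨ i' = i'') := by
      push_neg; exact ⟨h1', h2', h3'⟩
    simp only [pG, if_neg h1', if_neg hor, map_mul, mul_ne_zero_iff] at h1
    have h2 := h1.2.2
    rw [← sub_ne_zero]
    simpa [pC] using h2

end Stmt11Aux


/-- existence of encoding coefficients for the deterministic
construction: there exists `q₀` depending only on `k` such that over any finite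
field with at least `q₀` elements, for every family of scalars
`lam i i' = λ^{(i′)}_{i,1}` indexed by ordered pairs of distinct
`i, i' ∈ {2,…,k+2}`, there exist `γ_{i,1}, γ_{i,2}` (encoded as `γ i 0, γ i 1`)
simultaneously satisfying the coefficient conditions (3), (4), (5) of the
deterministic FMSR construction. -/
theorem stmt11 (k : ℕ) (hk : 2 ≤ k) :
    ∃ q0 : ℕ, ∀ (Fq : Type) [Field Fq] [Fintype Fq], q0 ≤ Fintype.card Fq →
      ∀ lam : ℕ → ℕ → Fq,
        ∃ γ : ℕ → Fin 2 → Fq,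
          (∀ i ∈ Finset.Icc 2 (k + 2), ∀ j ∈ Finset.Icc 2 (k + 2), i ≠ j →
            γ i 0 * γ j 1 ≠ γ i 1 * γ j 0) ∧
          (∀ i ∈ Finset.Icc 2 (k + 2), ∀ i' ∈ Finset.Icc 2 (k + 2), i ≠ i' →
            γ i 1 + γ i' 1 * lam i i' ≠ 0) ∧
          (∀ i ∈ Finset.Icc 2 (k + 2), ∀ i' ∈ Finset.Icc 2 (k + 2),
            ∀ i'' ∈ Finset.Icc 2 (k + 2), i ≠ i' → i ≠ i'' → i' ≠ i'' →
            (γ i 0 + γ i'' 0 * lam i i'') * (γ i' 1 + γ i'' 1 * lam i' i'') ≠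
            (γ i' 0 + γ i'' 0 * lam i' i'') * (γ i 1 + γ i'' 1 * lam i i'')) := by
  refine ⟨5 * (k + 1) ^ 3 + 1, ?_⟩
  intro Fq _ _ hq lam
  have hcard : (Finset.Icc 2 (k + 2)).card = k + 1 := by
    rw [Nat.card_Icc]; omega
  apply Stmt11Aux.helper Fq (Finset.Icc 2 (k + 2)) lam
  rw [hcard]
  omega
end
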